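/- Let $H, H_0, H_1$ be Hilbert spaces, $T : H_0 \to H$ a bounded linear operator, $T_1 : H_0 \to H_1$ a closed densely defined linear operator, and $F \subseteq H$ a closed subspace with $T(\ker T_1) \subseteq F$. Suppose $f \in F$ and $C > 0$ are such that $|\langle f, h\rangle_H| \le C\,\|T^* h + T_1^* v\|_{H_0}$ for all $h \in F$ and all $v \in \mathrm{Dom}(T_1^*)$. Then there exists $u \in \ker T_1$ with $Tu = f$ and $\|u\|_{H_0} \le C$. -/

import Mathlib

open scoped InnerProductSpace

/-- Skoda's fundamental functional-analysis lemma (one direction of Lemma 4):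
if `T : H₀ → H` is bounded, `T₁ : H₀ →ₗ. H₁` is closed and densely defined,
`F ⊆ H` is a closed subspace with `T (ker T₁) ⊆ F`, `f ∈ F`, and
`|⟪f, h⟫| ≤ C ‖T* h + T₁* v‖` for all `h ∈ F` and `v ∈ Dom T₁*`, then there is
`u ∈ ker T₁` with `T u = f` and `‖u‖ ≤ C`. -/
theorem skoda_fundamental_lemma
    {H H₀ H₁ : Type*}
    [NormedAddCommGroup H] [InnerProductSpace ℂ H] [CompleteSpace H]
    [NormedAddCommGroup H₀] [InnerProductSpace ℂ H₀] [CompleteSpace H₀]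
    [NormedAddCommGroup H₁] [InnerProductSpace ℂ H₁] [CompleteSpace H₁]
    (T : H₀ →L[ℂ] H) (T₁ : H₀ →ₗ.[ℂ] H₁)
    (hdense : Dense (T₁.domain : Set H₀)) (hclosed : T₁.IsClosed)
    (F : Submodule ℂ H) (hF : IsClosed (F : Set H))
    (hTF : ∀ u : T₁.domain, T₁ u = 0 → T u ∈ F)
    (f : H) (hf : f ∈ F) (C : ℝ) (hC : 0 < C)
    (hest : ∀ h ∈ F, ∀ v : T₁.adjoint.domain,
      ‖(⟪f, h⟫_ℂ : ℂ)‖ ≤ C * ‖ContinuousLinearMap.adjoint T h + T₁.adjoint v‖) :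
    ∃ u : T₁.domain, T₁ u = 0 ∧ T u = f ∧ ‖(u : H₀)‖ ≤ C := by
  classical
  set D := T₁.adjoint.domain with hD
  -- the linear map S (h, v) = T* h + T₁* v
  set S : (F × D) →ₗ[ℂ] H₀ :=
    { toFun := fun p => ContinuousLinearMap.adjoint T p.1 + T₁.adjoint p.2
      map_add' := by
        intro p q
        simp [T₁.adjoint.map_add, map_add]
        abel
      map_smul' := by
        intro c p
        simp [T₁.adjoint.map_smul, smul_add] } with hS
  have hSapp : ∀ p : F × D, S p = ContinuousLinearMap.adjoint T p.1 + T₁.adjoint p.2 :=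
    fun p => rfl
  -- the linear functional ψ (h, v) = ⟪f, h⟫
  set ψ : (F × D) →ₗ[ℂ] ℂ :=
    (innerₛₗ ℂ f).comp (F.subtype.comp (LinearMap.fst ℂ F D)) with hψ
  have hψapp : ∀ p : F × D, ψ p = ⟪f, (p.1 : H)⟫_ℂ := fun p => rfl
  have hest' : ∀ p : F × D, ‖ψ p‖ ≤ C * ‖S p‖ := by
    intro p
    rw [hψapp, hSapp]
    exact hest p.1 p.1.2 p.2
  have hker : LinearMap.ker S ≤ LinearMap.ker ψ := by
    intro p hp
    rw [LinearMap.mem_ker] at hp ⊢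
    have := hest' p
    rw [hp, norm_zero, mul_zero] at this
    exact norm_le_zero_iff.mp this
  -- the induced functional on the range of S
  set φ : (LinearMap.range S) →ₗ[ℂ] ℂ :=
    ((LinearMap.ker S).liftQ ψ hker).comp (LinearMap.quotKerEquivRange S).symm.toLinearMap with hφ
  have hφapp : ∀ p : F × D, φ ⟨S p, LinearMap.mem_range_self S p⟩ = ψ p := by
    intro p
    have h1 : (LinearMap.quotKerEquivRange S).symm ⟨S p, LinearMap.mem_range_self S p⟩
        = Submodule.Quotient.mk p := by
      rw [LinearEquiv.symm_apply_eq]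
      exact Subtype.ext (S.quotKerEquivRange_apply_mk p).symm
    simp only [hφ, LinearMap.coe_comp, LinearEquiv.coe_coe, Function.comp_apply, h1,
      Submodule.liftQ_apply]
  have hφbound : ∀ y : LinearMap.range S, ‖φ y‖ ≤ C * ‖y‖ := by
    rintro ⟨y, hy⟩
    obtain ⟨p, rfl⟩ := hy
    calc ‖φ ⟨S p, LinearMap.mem_range_self S p⟩‖ = ‖ψ p‖ := by rw [hφapp]
      _ ≤ C * ‖S p‖ := hest' p
      _ = C * ‖(⟨S p, LinearMap.mem_range_self S p⟩ : LinearMap.range S)‖ := rfl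
  set φc : (LinearMap.range S) →L[ℂ] ℂ := LinearMap.mkContinuous φ C hφbound with hφc
  have hφcnorm : ‖φc‖ ≤ C := LinearMap.mkContinuous_norm_le φ hC.le hφbound
  obtain ⟨g, hg, hgnorm⟩ := exists_extension_norm_eq (LinearMap.range S) φc
  set u : H₀ := (InnerProductSpace.toDual ℂ H₀).symm g with hu
  have huapp : ∀ x : H₀, ⟪u, x⟫_ℂ = g x := fun x =>
    InnerProductSpace.toDual_symm_apply
  have hunorm : ‖u‖ ≤ C := by
    rw [hu, LinearIsometryEquiv.norm_map, hgnorm]; exact hφcnorm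
  have key : ∀ (h : F) (v : D),
      ⟪u, ContinuousLinearMap.adjoint T h + T₁.adjoint v⟫_ℂ = ⟪f, (h : H)⟫_ℂ := by
    intro h v
    rw [huapp]
    have : (ContinuousLinearMap.adjoint T h + T₁.adjoint v : H₀) = S (h, v) := rfl
    rw [this]
    have := hg ⟨S (h, v), LinearMap.mem_range_self S (h, v)⟩
    rw [this]
    show φ _ = _
    rw [hφapp]
    exact hψapp (h, v)
  -- u is orthogonal to the range of T₁*
  have hv0 : ∀ v : D, ⟪(T₁.adjoint v : H₀), u⟫_ℂ = 0 := by
    intro v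
    have := key 0 v
    simp only [Submodule.coe_zero, map_zero, zero_add, inner_zero_right] at this
    rw [← inner_conj_symm, this, map_zero]
  -- show (u, 0) lies in the (closed) graph of T₁
  set W := WithLp 2 (H₀ × H₁) with hW
  set e : W ≃L[ℂ] H₀ × H₁ := WithLp.prodContinuousLinearEquiv 2 ℂ H₀ H₁ with he
  set G' : Submodule ℂ W := T₁.graph.comap ((e : W →L[ℂ] H₀ × H₁) : W →ₗ[ℂ] H₀ × H₁) with hG'
  have hG'mem : ∀ x : W, x ∈ G' ↔ e x ∈ T₁.graph := fun x => Iff.rfl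
  have hG'c : IsClosed (G' : Set W) := by
    have : (G' : Set W) = ⇑e ⁻¹' (T₁.graph : Set (H₀ × H₁)) := rfl
    rw [this]
    exact hclosed.preimage e.continuous
  haveI : CompleteSpace G' := hG'c.completeSpace_coe
  have horth : G'ᗮᗮ = G' := Submodule.orthogonal_orthogonal G'
  set x₀ : W := e.symm (u, 0) with hx₀def
  have hx₀ : x₀ ∈ G'ᗮᗮ := by
    rw [Submodule.mem_orthogonal]
    intro w hw
    -- every element of G'ᗮ has the form (-T₁† v, v)
    have hgr : ∀ x : T₁.domain, ⟪w.fst, (x : H₀)⟫_ℂ + ⟪w.snd, T₁ x⟫_ℂ = 0 := by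
      intro x
      have hm : e.symm ((x : H₀), T₁ x) ∈ G' := by
        rw [hG'mem, e.apply_symm_apply]
        exact T₁.mem_graph x
      have h0 := (Submodule.mem_orthogonal' G' w).mp hw _ hm
      rw [WithLp.prod_inner_apply] at h0
      convert h0 using 3 <;> rfl
    have hmem : w.snd ∈ T₁.adjoint.domain := by
      apply T₁.mem_adjoint_domain_of_exists
      refine ⟨-w.fst, fun x => ?_⟩
      rw [inner_neg_left]
      linear_combination -(hgr x)
    set v' : D := ⟨w.snd, hmem⟩ with hv'
    have hTv' : T₁.adjoint v' = -w.fst := by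
      apply T₁.adjoint_apply_eq hdense v'
      intro x
      show (⟪-w.fst, (x : H₀)⟫_ℂ : ℂ) = ⟪w.snd, T₁ x⟫_ℂ
      rw [inner_neg_left]
      linear_combination -(hgr x)
    rw [WithLp.prod_inner_apply]
    have hfst : x₀.fst = u := rfl
    have hsnd : x₀.snd = (0 : H₁) := rfl
    show ⟪w.fst, x₀.fst⟫_ℂ + ⟪w.snd, x₀.snd⟫_ℂ = 0
    rw [hfst, hsnd, inner_zero_right, add_zero]
    have : w.fst = -(T₁.adjoint v' : H₀) := by rw [hTv', neg_neg]
    rw [this, inner_neg_left, hv0 v', neg_zero]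
  rw [horth, hG'mem, e.apply_symm_apply, LinearPMap.mem_graph_iff] at hx₀
  obtain ⟨ux, hux1, hux2⟩ := hx₀
  refine ⟨ux, hux2, ?_, ?_⟩
  · -- T ux = f
    have hTuF : T ux ∈ F := hTF ux hux2
    have hperp : ∀ h ∈ F, ⟪T (ux : H₀) - f, h⟫_ℂ = 0 := by
      intro h hh
      have hk := key ⟨h, hh⟩ 0
      have h0 : (T₁.adjoint (0 : D) : H₀) = 0 := by simp
      rw [h0, add_zero, ContinuousLinearMap.adjoint_inner_right] at hk
      rw [inner_sub_left, hux1, hk]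
      simp
    have := hperp (T (ux : H₀) - f) (Submodule.sub_mem F hTuF hf)
    rw [inner_self_eq_zero, sub_eq_zero] at this
    exact this
  · rw [hux1]; exact hunorm
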